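/- If σ_a and σ_b are reasonable strategies of player 0 such that no strict improvement of σ_b lies in σ_a (S_{σ_b} ∩ σ_a = ∅), then σ_a ≼ σ_b, i.e., V_{σ_a}(s) ≼ V_{σ_b}(s) for all nodes s. -/

import Mathlib

open scoped Classical

/-- The order `≺` on integer color profiles `ℤ^d`: compare at the largest index where
they differ; at an even index the larger entry wins, at an odd index the smaller one. -/
def FinLt {d : ℕ} (p q : Fin d → ℤ) : Prop :=
  ∃ k : Fin d, p k ≠ q k ∧ (∀ j, k < j → p j = q j) ∧
    ((Even (k : ℕ) ∧ p k < q k) ∨ (Odd (k : ℕ) ∧ q k < p k))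

/-- Reflexive closure `≼` of `FinLt`. -/
def FinLe {d : ℕ} (p q : Fin d → ℤ) : Prop := p = q ∨ FinLt p q

/-- Color profiles: `ℤ^d` together with `-∞` (`bot`) and `∞` (`top`). -/
inductive Prof (d : ℕ) where
  | bot : Prof d
  | fin : (Fin d → ℤ) → Prof d
  | top : Prof d

/-- The order `≺` on color profiles: `-∞` is the bottom element, `∞` the top element,
finite profiles are compared by `FinLt`. -/
def Prof.Lt {d : ℕ} : Prof d → Prof d → Prop
  | .bot, .bot => False
  | .bot, .fin _ => True
  | .bot, .top => True
  | .fin _, .bot => False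
  | .fin p, .fin q => FinLt p q
  | .fin _, .top => True
  | .top, _ => False

/-- Reflexive closure `≼` of `Prof.Lt`. -/
def Prof.Le {d : ℕ} (p q : Prof d) : Prop := p = q ∨ Prof.Lt p q

/-- Adding a vector in `ℤ^d` to a profile; `±∞` are absorbing. -/
def Prof.add {d : ℕ} : Prof d → (Fin d → ℤ) → Prof d
  | .bot, _ => .bot
  | .fin p, q => .fin (p + q)
  | .top, _ => .top

/-- A parity game arena: a finite directed graph, each node owned by player 0 or 1 and
colored by a color in `{0,…,d-1}`; every node has at least one successor. -/
structure PGA (V : Type) (d : ℕ) where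
  edge : V → V → Prop
  owner : V → Fin 2
  color : V → Fin d
  succ : ∀ v, ∃ w, edge v w

variable {V : Type} {d : ℕ}

/-- The profile `℘(s)` of a single vertex: the unit vector at its color. -/
def unitProf (A : PGA V d) (s : V) : Fin d → ℤ := fun k => if A.color s = k then 1 else 0

/-- The color profile `℘(π)` of a finite sequence of vertices: how often each color occurs. -/
def listProf (A : PGA V d) (L : List V) : Fin d → ℤ := fun k => ((L.map A.color).count k : ℤ)

/-- `℘(s) + p` for a vertex `s` and a profile `p`. -/
def addV (A : PGA V d) (s : V) (p : Prof d) : Prof d := p.add (unitProf A s)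

/-- Edges of the escape arena `A_⊥` over `Option V`, where `none` is the sink `⊥`:
all edges of `A`, plus an edge from every player-0 node to `⊥`; `⊥` has no outgoing edges. -/
def EdgeB (A : PGA V d) : Option V → Option V → Prop
  | some u, some v => A.edge u v
  | some u, none => A.owner u = 0
  | none, _ => False

/-- A (memoryless, possibly non-deterministic) strategy of player 0 in `A_⊥`:
a set of player-0 edges giving every player-0 node at least one successor. -/
def Strategy0 (A : PGA V d) (σ : V → Option V → Prop) : Prop :=
  (∀ s t, σ s t → A.owner s = 0 ∧ EdgeB A (some s) t) ∧
  (∀ s, A.owner s = 0 → ∃ t, σ s t)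

/-- A (memoryless, possibly non-deterministic) strategy of player 1 (who never moves to `⊥`). -/
def Strategy1 (A : PGA V d) (τ : V → V → Prop) : Prop :=
  (∀ s t, τ s t → A.owner s = 1 ∧ A.edge s t) ∧
  (∀ s, A.owner s = 1 → ∃ t, τ s t)

/-- A strategy is deterministic if it picks at most one successor per node. -/
def Deterministic (σ : V → Option V → Prop) : Prop :=
  ∀ s t t', σ s t → σ s t' → t = t'

/-- Edges of `A_⊥` restricted to a player-0 strategy `σ` that stay inside `V`
(cycles of `A_⊥|σ` never pass through `⊥`). -/
def EdgeSig (A : PGA V d) (σ : V → Option V → Prop) (u v : V) : Prop :=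
  (A.owner u = 1 ∧ A.edge u v) ∨ σ u (some v)

/-- A (nonempty) cycle in `A_⊥|σ`: consecutive edges plus the wrap-around edge. -/
def CycleIn (A : PGA V d) (σ : V → Option V → Prop) (L : List V) : Prop :=
  L ≠ [] ∧ List.Chain' (EdgeSig A σ) L ∧
  ∀ a b, L.head? = some a → L.getLast? = some b → EdgeSig A σ b a

/-- A player-0 strategy is reasonable if `A_⊥|σ` has no 1-dominated cycle,
i.e. on every cycle the dominating (maximal) color is even. -/
def Reasonable (A : PGA V d) (σ : V → Option V → Prop) : Prop :=
  ∀ L, CycleIn A σ L → ∀ v ∈ L, (∀ w ∈ L, A.color w ≤ A.color v) → Even ((A.color v : ℕ))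

/-- One step of a play in `A_⊥` with player 0 using `σ` and player 1 using `τ`;
the sink `⊥` is absorbing. -/
def PlayStep (A : PGA V d) (σ : V → Option V → Prop) (τ : V → V → Prop) :
    Option V → Option V → Prop
  | none, y => y = none
  | some u, y => (A.owner u = 0 ∧ σ u y) ∨ (A.owner u = 1 ∧ ∃ v, y = some v ∧ τ u v)

/-- A play from `s` in `A_⊥|σ,τ` (modelled with absorbing sink). -/
def IsPlay (A : PGA V d) (σ : V → Option V → Prop) (τ : V → V → Prop)
    (s : V) (π : ℕ → Option V) : Prop :=
  π 0 = some s ∧ ∀ n, PlayStep A σ τ (π n) (π (n + 1))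

/-- One step of a play in `A_⊥` with player 0 using `σ`, player 1 unconstrained. -/
def PlayStepB (A : PGA V d) (σ : V → Option V → Prop) : Option V → Option V → Prop
  | none, y => y = none
  | some u, y => (A.owner u = 0 ∧ σ u y) ∨ (A.owner u = 1 ∧ ∃ v, y = some v ∧ A.edge u v)

/-- A play from `s` in `A_⊥|σ` against an arbitrary player 1. -/
def IsPlayB (A : PGA V d) (σ : V → Option V → Prop) (s : V) (π : ℕ → Option V) : Prop :=
  π 0 = some s ∧ ∀ n, PlayStepB A σ (π n) (π (n + 1))

/-- Color `k` occurs at position `n` of the play `π`. -/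
def ColorAt (A : PGA V d) (π : ℕ → Option V) (n : ℕ) (k : Fin d) : Prop :=
  ∃ v, π n = some v ∧ A.color v = k

/-- An infinite play of `A_⊥` (never reaching `⊥`) is won by player 0 iff the maximal color
occurring infinitely often is even. -/
def Won0B (A : PGA V d) (π : ℕ → Option V) : Prop :=
  ∃ k : Fin d, Even ((k : ℕ)) ∧ (∀ N, ∃ n ≥ N, ColorAt A π n k) ∧
    ∀ j : Fin d, k < j → ∃ N, ∀ n ≥ N, ¬ ColorAt A π n j

/-- The value `℘(π)` of a play in `A_⊥`: for a finite play (reaching `⊥`), the color profile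
of its vertices; for an infinite play, `∞` if player 0 wins it and `-∞` otherwise. -/
noncomputable def PlayValue (A : PGA V d) (π : ℕ → Option V) : Prof d :=
  if h : ∃ n, π n = none then
    .fin (fun k =>
      (((Finset.range (Nat.find h)).filter (fun n => ColorAt A π n k)).card : ℤ))
  else if Won0B A π then .top else .bot

/-- `p` is the `≺`-maximum of the set `S` of profiles. -/
def IsMaxOf {d : ℕ} (S : Set (Prof d)) (p : Prof d) : Prop := p ∈ S ∧ ∀ q ∈ S, Prof.Le q p

/-- `p` is the `≺`-minimum of the set `S` of profiles. -/
def IsMinOf {d : ℕ} (S : Set (Prof d)) (p : Prof d) : Prop := p ∈ S ∧ ∀ q ∈ S, Prof.Le p q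

/-- `W` is the valuation `𝒱_σ` of the player-0 strategy `σ`: `W(⊥) = ō`, and `W(s)` is the
`≺`-minimal value player 1 can guarantee (by a memoryless strategy) in any play from `s`
in `A_⊥|σ`. -/
def IsValuation (A : PGA V d) (σ : V → Option V → Prop) (W : Option V → Prof d) : Prop :=
  W none = .fin 0 ∧
  ∀ s : V, IsMinOf
    { p | ∃ τ, Strategy1 A τ ∧
        IsMaxOf { q | ∃ π, IsPlay A σ τ s π ∧ q = PlayValue A π } p }
    (W (some s))

/-- `(s,t)` is an improvement of `σ` w.r.t. the valuation `W`: a player-0 edge with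
`W(s) ≼ ℘(s) + W(t)`.  `I_σ` is the set (strategy) of all improvements. -/
def Improvement (A : PGA V d) (W : Option V → Prof d) (s : V) (t : Option V) : Prop :=
  A.owner s = 0 ∧ EdgeB A (some s) t ∧ Prof.Le (W (some s)) (addV A s (W t))

/-- `(s,t)` is a strict improvement of `σ` w.r.t. `W`: a player-0 edge with
`W(s) ≺ ℘(s) + W(t)`. -/
def StrictImp (A : PGA V d) (W : Option V → Prof d) (s : V) (t : Option V) : Prop :=
  A.owner s = 0 ∧ EdgeB A (some s) t ∧ Prof.Lt (W (some s)) (addV A s (W t))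

/-- A memoryless strategy of player 0 in the original parity game arena `A`. -/
def Strat0A (A : PGA V d) (σ : V → V → Prop) : Prop :=
  (∀ s t, σ s t → A.owner s = 0 ∧ A.edge s t) ∧ (∀ s, A.owner s = 0 → ∃ t, σ s t)

/-- A play in `A` from `s` where player 0 follows `σ` and player 1 is unconstrained. -/
def PlayA (A : PGA V d) (σ : V → V → Prop) (s : V) (π : ℕ → V) : Prop :=
  π 0 = s ∧ ∀ n, (A.owner (π n) = 0 → σ (π n) (π (n + 1))) ∧
    (A.owner (π n) = 1 → A.edge (π n) (π (n + 1)))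

/-- Parity winning condition in `A` for player 0: the maximal color seen infinitely often is even. -/
def Won0A (A : PGA V d) (π : ℕ → V) : Prop :=
  ∃ k : Fin d, Even ((k : ℕ)) ∧ (∀ N, ∃ n ≥ N, A.color (π n) = k) ∧
    ∀ j : Fin d, k < j → ∃ N, ∀ n ≥ N, A.color (π n) ≠ j

/-- Player 0 wins the node `s` of the parity game arena `A` (with a memoryless strategy). -/
def Win0 (A : PGA V d) (s : V) : Prop :=
  ∃ σ, Strat0A A σ ∧ ∀ π, PlayA A σ s π → Won0A A π

/-- An acyclic path of `A_⊥` terminating in `⊥`: pairwise distinct vertices, consecutive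
edges of `A`, and the last vertex owned by player 0 (so it has the edge to `⊥`). -/
def AcyclicToBot (A : PGA V d) (L : List V) : Prop :=
  L.Nodup ∧ List.Chain' A.edge L ∧ ∀ b, L.getLast? = some b → A.owner b = 0


section AuxOrder
variable {d : ℕ}

lemma finLt_irrefl (p : Fin d → ℤ) : ¬ FinLt p p := by
  rintro ⟨k, hne, -, -⟩; exact hne rfl

lemma finLt_trans {p q r : Fin d → ℤ} (h1 : FinLt p q) (h2 : FinLt q r) : FinLt p r := by
  obtain ⟨k1, hne1, hup1, hs1⟩ := h1
  obtain ⟨k2, hne2, hup2, hs2⟩ := h2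
  rcases lt_trichotomy k1 k2 with h | h | h
  · refine ⟨k2, ?_, ?_, ?_⟩
    · rw [hup1 k2 h] at *; exact hne2
    · intro j hj; rw [hup1 j (h.trans hj), hup2 j hj]
    · rw [hup1 k2 h]; exact hs2
  · subst h
    refine ⟨k1, ?_, fun j hj => (hup1 j hj).trans (hup2 j hj), ?_⟩
    · rcases hs1 with ⟨he, hlt1⟩ | ⟨ho, hlt1⟩
      · rcases hs2 with ⟨-, hlt2⟩ | ⟨ho, -⟩
        · exact ne_of_lt (hlt1.trans hlt2)
        · exact absurd he (Nat.not_even_iff_odd.mpr ho)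
      · rcases hs2 with ⟨he, -⟩ | ⟨-, hlt2⟩
        · exact absurd he (Nat.not_even_iff_odd.mpr ho)
        · exact ne_of_gt (hlt2.trans hlt1)
    · rcases hs1 with ⟨he, hlt1⟩ | ⟨ho, hlt1⟩
      · rcases hs2 with ⟨-, hlt2⟩ | ⟨ho, -⟩
        · exact Or.inl ⟨he, hlt1.trans hlt2⟩
        · exact absurd he (Nat.not_even_iff_odd.mpr ho)
      · rcases hs2 with ⟨he, -⟩ | ⟨-, hlt2⟩
        · exact absurd he (Nat.not_even_iff_odd.mpr ho)
        · exact Or.inr ⟨ho, hlt2.trans hlt1⟩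
  · refine ⟨k1, ?_, ?_, ?_⟩
    · rw [← hup2 k1 h]; exact hne1
    · intro j hj; rw [hup1 j hj, hup2 j (h.trans hj)]
    · rw [← hup2 k1 h]; exact hs1

lemma finLt_total {p q : Fin d → ℤ} (h : p ≠ q) : FinLt p q ∨ FinLt q p := by
  have hne : (Finset.univ.filter (fun k => p k ≠ q k)).Nonempty := by
    rcases Function.ne_iff.mp h with ⟨k, hk⟩
    exact ⟨k, by simp [hk]⟩
  set k := (Finset.univ.filter (fun k => p k ≠ q k)).max' hne with hkdef
  have hkmem : p k ≠ q k := by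
    have := (Finset.univ.filter (fun k => p k ≠ q k)).max'_mem hne
    simpa using this
  have hup : ∀ j, k < j → p j = q j := by
    intro j hj
    by_contra hne'
    exact absurd (Finset.le_max' _ j (by simp [hne'])) (not_le.mpr hj)
  rcases Nat.even_or_odd (k : ℕ) with he | ho
  · rcases lt_or_gt_of_ne hkmem with hlt | hlt
    · exact Or.inl ⟨k, hkmem, hup, Or.inl ⟨he, hlt⟩⟩
    · exact Or.inr ⟨k, hkmem.symm, fun j hj => (hup j hj).symm, Or.inl ⟨he, hlt⟩⟩
  · rcases lt_or_gt_of_ne hkmem with hlt | hlt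
    · exact Or.inr ⟨k, hkmem.symm, fun j hj => (hup j hj).symm, Or.inr ⟨ho, hlt⟩⟩
    · exact Or.inl ⟨k, hkmem, hup, Or.inr ⟨ho, hlt⟩⟩

lemma finLt_add {p q r : Fin d → ℤ} (h : FinLt p q) : FinLt (p + r) (q + r) := by
  obtain ⟨k, hne, hup, hs⟩ := h
  refine ⟨k, ?_, fun j hj => by simp [hup j hj], ?_⟩
  · simpa using hne
  · rcases hs with ⟨he, hlt⟩ | ⟨ho, hlt⟩
    · exact Or.inl ⟨he, by simpa using hlt⟩
    · exact Or.inr ⟨ho, by simpa using hlt⟩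

namespace Prof

lemma lt_irrefl (p : Prof d) : ¬ Prof.Lt p p := by
  cases p with
  | bot => exact fun h => h
  | fin p => exact finLt_irrefl p
  | top => exact fun h => h

lemma lt_trans {p q r : Prof d} (h1 : Prof.Lt p q) (h2 : Prof.Lt q r) : Prof.Lt p r := by
  cases p <;> cases q <;> cases r <;> simp_all [Prof.Lt]
  exact finLt_trans h1 h2

lemma le_refl (p : Prof d) : Prof.Le p p := Or.inl rfl

lemma le_trans {p q r : Prof d} (h1 : Prof.Le p q) (h2 : Prof.Le q r) : Prof.Le p r := by
  rcases h1 with rfl | h1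
  · exact h2
  · rcases h2 with rfl | h2
    · exact Or.inr h1
    · exact Or.inr (lt_trans h1 h2)

lemma lt_asymm {p q : Prof d} (h1 : Prof.Lt p q) (h2 : Prof.Lt q p) : False :=
  lt_irrefl p (lt_trans h1 h2)

lemma not_lt_of_le {p q : Prof d} (h : Prof.Le p q) : ¬ Prof.Lt q p := by
  rcases h with rfl | h
  · exact lt_irrefl p
  · exact fun h2 => lt_asymm h h2

lemma lt_total {p q : Prof d} (h : p ≠ q) : Prof.Lt p q ∨ Prof.Lt q p := by
  cases p <;> cases q <;> simp_all [Prof.Lt]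
  exact finLt_total (by simpa using h)

lemma le_of_not_lt {p q : Prof d} (h : ¬ Prof.Lt q p) : Prof.Le p q := by
  by_cases he : p = q
  · exact Or.inl he
  · rcases lt_total he with h1 | h1
    · exact Or.inr h1
    · exact absurd h1 h

lemma le_antisymm {p q : Prof d} (h1 : Prof.Le p q) (h2 : Prof.Le q p) : p = q := by
  rcases h1 with rfl | h1
  · rfl
  · rcases h2 with rfl | h2
    · rfl
    · exact absurd h2 (not_lt_of_le (Or.inr h1))

lemma bot_le (p : Prof d) : Prof.Le Prof.bot p := by
  cases p
  · exact Or.inl rfl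
  · exact Or.inr trivial
  · exact Or.inr trivial

lemma le_top (p : Prof d) : Prof.Le p Prof.top := by
  cases p
  · exact Or.inr trivial
  · exact Or.inr trivial
  · exact Or.inl rfl

lemma eq_top_of_top_le {p : Prof d} (h : Prof.Le Prof.top p) : p = Prof.top := by
  rcases h with h | h
  · exact h.symm
  · cases p <;> simp_all [Prof.Lt]

lemma ne_bot_of_le_of_ne_bot {p q : Prof d} (h : Prof.Le p q) (hp : p ≠ Prof.bot) :
    q ≠ Prof.bot := by
  rintro rfl
  rcases h with rfl | h
  · exact hp rfl
  · cases p <;> simp_all [Prof.Lt]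

lemma add_zero (p : Prof d) : p.add 0 = p := by
  cases p <;> simp [Prof.add]

lemma add_add (p : Prof d) (q r : Fin d → ℤ) : (p.add q).add r = p.add (q + r) := by
  cases p <;> simp [Prof.add, add_assoc]

lemma add_le_add {p q : Prof d} (r : Fin d → ℤ) (h : Prof.Le p q) :
    Prof.Le (p.add r) (q.add r) := by
  rcases h with rfl | h
  · exact le_refl _
  · cases p <;> cases q
    case bot.bot => exact le_refl _
    case bot.fin => exact bot_le _
    case bot.top => exact bot_le _
    case fin.bot => exact absurd h (by simp [Prof.Lt])
    case fin.fin => exact Or.inr (finLt_add h)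
    case fin.top => exact le_top _
    case top.bot => exact absurd h (by simp [Prof.Lt])
    case top.fin => exact absurd h (by simp [Prof.Lt])
    case top.top => exact le_refl _

lemma add_ne_bot {p : Prof d} (r : Fin d → ℤ) (h : p ≠ Prof.bot) : p.add r ≠ Prof.bot := by
  cases p <;> simp_all [Prof.add]

end Prof

end AuxOrder

section AuxGame
variable {V : Type} {d : ℕ}

/-- Count profile of the first `n` positions of a play. -/
noncomputable def Pn (A : PGA V d) (π : ℕ → Option V) (n : ℕ) : Fin d → ℤ :=
  fun k => (((Finset.range n).filter (fun m => ColorAt A π m k)).card : ℤ)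

lemma play_absorb {A : PGA V d} {σ : V → Option V → Prop} {τ : V → V → Prop}
    {π : ℕ → Option V} (hstep : ∀ n, PlayStep A σ τ (π n) (π (n + 1))) :
    ∀ {n}, π n = none → ∀ m, n ≤ m → π m = none := by
  intro n hn m hm
  induction m with
  | zero =>
    have h0 : n = 0 := Nat.le_zero.mp hm
    subst h0; exact hn
  | succ m ih =>
    rcases Nat.lt_or_ge n (m+1) with h | h
    · have hm' : π m = none := ih (by omega)
      have := hstep m
      rw [hm'] at this
      exact this
    · have : n = m + 1 := by omega
      exact this ▸ hn

lemma play_some_of_some_later {A : PGA V d} {σ : V → Option V → Prop} {τ : V → V → Prop}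
    {π : ℕ → Option V} (hstep : ∀ n, PlayStep A σ τ (π n) (π (n + 1)))
    {n : ℕ} {u : V} (hn : π n = some u) {m : ℕ} (hm : m ≤ n) : ∃ v, π m = some v := by
  cases hπm : π m with
  | none => rw [play_absorb hstep hπm n hm] at hn; cases hn
  | some v => exact ⟨v, rfl⟩

lemma exists_play (A : PGA V d) (σ : V → Option V → Prop) (τ : V → V → Prop)
    (hσ : Strategy0 A σ) (hτ : Strategy1 A τ) (s : V) : ∃ π, IsPlay A σ τ s π := by
  classical
  have hnext : ∀ x : Option V, ∃ y, PlayStep A σ τ x y := by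
    rintro (_ | u)
    · exact ⟨none, rfl⟩
    · rcases Fin.exists_fin_two.mp ⟨A.owner u, rfl⟩ with h | h
      · obtain ⟨t, ht⟩ := hσ.2 u h
        exact ⟨t, Or.inl ⟨h, ht⟩⟩
      · obtain ⟨t, ht⟩ := hτ.2 u h
        exact ⟨some t, Or.inr ⟨h, t, rfl, ht⟩⟩
  choose nx hnx using hnext
  refine ⟨fun n => nx^[n] (some s), by simp, fun n => ?_⟩
  show PlayStep A σ τ (nx^[n] (some s)) (nx^[n + 1] (some s))
  rw [Function.iterate_succ_apply']
  exact hnx _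

lemma Pn_zero (A : PGA V d) (π : ℕ → Option V) : Pn A π 0 = 0 := by
  funext k; simp [Pn]

lemma Pn_succ_some {A : PGA V d} {π : ℕ → Option V} {n : ℕ} {u : V} (h : π n = some u) :
    Pn A π (n + 1) = Pn A π n + unitProf A u := by
  funext k
  have hca : ColorAt A π n k ↔ A.color u = k := by
    constructor
    · rintro ⟨v, hv, hc⟩; rw [h] at hv; cases hv; exact hc
    · intro hc; exact ⟨u, h, hc⟩
  simp only [Pn, Finset.range_add_one, Finset.filter_insert, unitProf, Pi.add_apply]
  by_cases hc : A.color u = k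
  · rw [if_pos (hca.mpr hc), if_pos hc,
      Finset.card_insert_of_notMem (by simp)]
    push_cast; ring
  · rw [if_neg (fun hcc => hc (hca.mp hcc)), if_neg hc]
    simp

lemma Pn_succ_none {A : PGA V d} {π : ℕ → Option V} {n : ℕ} (h : π n = none) :
    Pn A π (n + 1) = Pn A π n := by
  funext k
  have hca : ¬ ColorAt A π n k := by rintro ⟨v, hv, -⟩; rw [h] at hv; cases hv
  simp only [Pn, Finset.range_add_one, Finset.filter_insert]
  rw [if_neg hca]

/-- The general telescoping invariant along a play. -/
lemma invariant (A : PGA V d) (W : Option V → Prof d) {π : ℕ → Option V} {s : V}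
    (h0 : π 0 = some s)
    (habs : ∀ n, π n = none → π (n + 1) = none)
    (hstep : ∀ n u, π n = some u → Prof.Le ((W (π (n + 1))).add (unitProf A u)) (W (some u))) :
    ∀ n, Prof.Le ((W (π n)).add (Pn A π n)) (W (some s)) := by
  intro n
  induction n with
  | zero => rw [h0, Pn_zero, Prof.add_zero]; exact Prof.le_refl _
  | succ n ih =>
    cases hn : π n with
    | none =>
      rw [habs n hn, Pn_succ_none hn, ← hn]
      exact ih
    | some u =>
      have h1 := hstep n u hn
      have h2 := Prof.add_le_add (Pn A π n) h1
      rw [Prof.add_add] at h2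
      rw [Pn_succ_some hn, add_comm (Pn A π n) (unitProf A u)]
      rw [hn] at ih
      exact Prof.le_trans h2 ih

end AuxGame

section AuxCycle
variable {V : Type} {d : ℕ}

lemma edgeSig_of_step {A : PGA V d} {σ : V → Option V → Prop} {τ : V → V → Prop}
    (hτ : Strategy1 A τ) {a b : V} (h : PlayStep A σ τ (some a) (some b)) :
    EdgeSig A σ a b := by
  rcases h with ⟨h1, h2⟩ | ⟨h1, v, hv, h2⟩
  · exact Or.inr h2
  · cases hv; exact Or.inl ⟨h1, (hτ.1 _ _ h2).2⟩

lemma segment_even_max {A : PGA V d} {σ : V → Option V → Prop} {τ : V → V → Prop}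
    (hτ : Strategy1 A τ) (hr : Reasonable A σ)
    {π : ℕ → Option V} (hstep : ∀ n, PlayStep A σ τ (π n) (π (n + 1)))
    {n1 n2 : ℕ} (h12 : n1 < n2) (f : ℕ → V)
    (hf : ∀ m, m ≤ n2 → π m = some (f m))
    (hloop : f n2 = f n1)
    {k : Fin d} (hk : ∃ m, n1 ≤ m ∧ m < n2 ∧ A.color (f m) = k)
    (hmax : ∀ m, n1 ≤ m → m < n2 → A.color (f m) ≤ k) : Even (k : ℕ) := by
  obtain ⟨c, hc⟩ : ∃ c, n2 = n1 + c + 1 := ⟨n2 - n1 - 1, by omega⟩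
  subst hc
  set g : ℕ → V := fun i => f (n1 + i) with hg
  set L : List V := (List.range (c + 1)).map g with hL
  have hLlen : L.length = c + 1 := by simp [hL]
  have hgetL : ∀ (i : ℕ) (h : i < L.length), L.get ⟨i, h⟩ = g i := by
    intro i h; simp [hL]
  have hmem : ∀ w ∈ L, ∃ i, i ≤ c ∧ w = g i := by
    intro w hw
    rw [hL, List.mem_map] at hw
    obtain ⟨i, hi, rfl⟩ := hw
    exact ⟨i, by have := List.mem_range.mp hi; omega, rfl⟩
  have hstep' : ∀ i, i ≤ c → EdgeSig A σ (g i) (g (i + 1)) := by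
    intro i hi
    have h1 : π (n1 + i) = some (g i) := hf _ (by omega)
    have h2 : π (n1 + i + 1) = some (g (i + 1)) := by
      have := hf (n1 + (i + 1)) (by omega)
      simpa [← Nat.add_assoc, hg] using this
    have := hstep (n1 + i)
    rw [h1, h2] at this
    exact edgeSig_of_step hτ this
  have hcyc : CycleIn A σ L := by
    refine ⟨by simp [hL], ?_, ?_⟩
    · refine List.isChain_iff_getElem.mpr ?_
      intro i hi
      rw [show L[i] = g i from hgetL i (by omega), show L[i + 1] = g (i + 1) from hgetL (i + 1) hi]
      exact hstep' i (by omega)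
    · intro a b hha hhb
      have ha' : a = g 0 := by
        rw [hL, List.range_succ_eq_map] at hha
        simp at hha
        exact hha.symm
      have hb' : b = g c := by
        rw [hL, List.range_succ, List.map_append] at hhb
        simp at hhb
        exact hhb.symm
      subst ha'; subst hb'
      have := hstep' c (le_refl c)
      have hg0 : g (c + 1) = g 0 := by
        simp only [hg]
        rw [show n1 + (c + 1) = n1 + c + 1 by ring, show (n1 + 0) = n1 by ring]
        exact hloop
      rwa [hg0] at this
  obtain ⟨m0, hm1, hm2, hm3⟩ := hk
  have hv : g (m0 - n1) ∈ L := by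
    rw [hL, List.mem_map]
    exact ⟨m0 - n1, List.mem_range.mpr (by omega), rfl⟩
  have hgm : g (m0 - n1) = f m0 := by simp only [hg]; congr 1; omega
  have := hr L hcyc (g (m0 - n1)) hv (by
    intro w hw
    obtain ⟨i, hi, rfl⟩ := hmem w hw
    rw [hgm, hm3]
    exact hmax (n1 + i) (by omega) (by omega))
  rwa [hgm, hm3] at this

end AuxCycle

section AuxLasso
variable {V : Type} {d : ℕ}

lemma lasso {A : PGA V d} {σ : V → Option V → Prop} {τ : V → V → Prop}
    (hτ : Strategy1 A τ) (hr : Reasonable A σ)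
    {π : ℕ → Option V} {s : V} (hplay : IsPlay A σ τ s π)
    {n1 n2 : ℕ} (h12 : n1 < n2) {u : V} (h1 : π n1 = some u) (h2 : π n2 = some u) :
    ∃ ρ, IsPlay A σ τ s ρ ∧ PlayValue A ρ = Prof.top := by
  classical
  obtain ⟨h0, hstep⟩ := hplay
  set p := n2 - n1 with hpdef
  have hp : 0 < p := by omega
  set lift : ℕ → ℕ := fun m => if m < n1 then m else n1 + (m - n1) % p with hlift
  set f : ℕ → V := fun m => (π m).getD u with hfdef
  have hf : ∀ m, m ≤ n2 → π m = some (f m) := by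
    intro m hm
    obtain ⟨v, hv⟩ := play_some_of_some_later hstep h2 hm
    rw [hv]; simp [hfdef, hv]
  have hlift_le : ∀ m, lift m ≤ n2 := by
    intro m
    simp only [hlift]
    split
    · omega
    · have := Nat.mod_lt (m - n1) hp; omega
  have hlift_lt : ∀ m, n1 ≤ m → n1 ≤ lift m ∧ lift m < n2 := by
    intro m hm
    simp only [hlift, if_neg (by omega : ¬ m < n1)]
    have := Nat.mod_lt (m - n1) hp; omega
  have hlift_id : ∀ m, m ≤ n1 → lift m = m := by
    intro m hm
    simp only [hlift]
    split
    · rfl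
    · have : m = n1 := by omega
      subst this; simp
  have hper : ∀ m, n1 ≤ m → lift (m + p) = lift m := by
    intro m hm
    simp only [hlift, if_neg (by omega : ¬ m + p < n1), if_neg (by omega : ¬ m < n1)]
    have : m + p - n1 = (m - n1) + p := by omega
    rw [this, Nat.add_mod_right]
  set ρ : ℕ → Option V := fun m => π (lift m) with hρ
  have hρm : ∀ m, ρ m = π (lift m) := fun m => rfl
  have hρ0 : ρ 0 = some s := by
    rw [hρm, hlift_id 0 (by omega)]; exact h0
  have hρstep : ∀ m, PlayStep A σ τ (ρ m) (ρ (m + 1)) := by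
    intro m
    rw [hρm, hρm]
    rcases Nat.lt_or_ge m n1 with hm | hm
    · rw [hlift_id m (by omega), hlift_id (m + 1) (by omega)]
      exact hstep m
    · have hr1 : (m - n1) % p < p := Nat.mod_lt _ hp
      have hm1 : m + 1 - n1 = (m - n1) + 1 := by omega
      have key : (m - n1 + 1) % p = ((m - n1) % p + 1) % p := (Nat.mod_add_mod (m - n1) p 1).symm
      rcases Nat.lt_or_ge ((m - n1) % p + 1) p with hcase | hcase
      · have hsame : lift (m + 1) = lift m + 1 := by
          simp only [hlift, if_neg (by omega : ¬ m + 1 < n1), if_neg (by omega : ¬ m < n1), hm1,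
            key, Nat.mod_eq_of_lt hcase]
          omega
        rw [hsame]; exact hstep (lift m)
      · have hcase' : (m - n1) % p + 1 = p := by omega
        have hl1 : lift (m + 1) = n1 := by
          simp only [hlift, if_neg (by omega : ¬ m + 1 < n1), hm1, key, hcase', Nat.mod_self]
          omega
        have hl2 : lift m = n2 - 1 := by
          simp only [hlift, if_neg (by omega : ¬ m < n1)]
          omega
        rw [hl1, hl2]
        have := hstep (n2 - 1)
        rw [show n2 - 1 + 1 = n2 by omega, h2, ← h1] at this
        exact this
  have hnonone : ¬ ∃ n, ρ n = none := by
    rintro ⟨n, hn⟩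
    rw [hρm, hf _ (hlift_le n)] at hn
    cases hn
  -- the dominating color of the loop
  have hKne : (Finset.Ico n1 n2).Nonempty := ⟨n1, by simp [Finset.mem_Ico]; omega⟩
  have hKne' : ((Finset.Ico n1 n2).image (fun m => A.color (f m))).Nonempty := hKne.image _
  set k := ((Finset.Ico n1 n2).image (fun m => A.color (f m))).max' hKne' with hkdef
  obtain ⟨m0, hm0, hm0k⟩ : ∃ m0, (n1 ≤ m0 ∧ m0 < n2) ∧ A.color (f m0) = k := by
    have hmm := Finset.max'_mem _ hKne'
    rw [Finset.mem_image] at hmm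
    obtain ⟨m0, hm0, hm0k⟩ := hmm
    exact ⟨m0, by simpa [Finset.mem_Ico] using hm0, hm0k⟩
  have hkmax : ∀ m, n1 ≤ m → m < n2 → A.color (f m) ≤ k := by
    intro m hma hmb
    exact Finset.le_max' _ _ (by rw [Finset.mem_image]; exact ⟨m, by simp [Finset.mem_Ico]; omega, rfl⟩)
  have hloop : f n2 = f n1 := by
    have e1 := hf n2 (le_refl _)
    have e2 := hf n1 (by omega)
    rw [h2] at e1; rw [h1] at e2
    rw [← Option.some_inj, ← e1, ← e2]
  have heven : Even (k : ℕ) :=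
    segment_even_max hτ hr hstep h12 f hf hloop ⟨m0, hm0.1, hm0.2, hm0k⟩ hkmax
  -- ρ is eventually within the loop positions
  have hρloop : ∀ m, n1 ≤ m → ∃ m', n1 ≤ m' ∧ m' < n2 ∧ ρ m = some (f m') := by
    intro m hm
    obtain ⟨ha, hb⟩ := hlift_lt m hm
    exact ⟨lift m, ha, hb, by rw [hρm, hf _ (by omega)]⟩
  have hwon : Won0B A ρ := by
    refine ⟨k, heven, ?_, ?_⟩
    · -- k occurs infinitely often: at positions m0 + j * p
      intro N
      have hcol : ∀ j, ColorAt A ρ (m0 + j * p) k := by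
        intro j
        induction j with
        | zero =>
          have : lift m0 = m0 := by
            simp only [hlift, if_neg (by omega : ¬ m0 < n1)]
            rw [Nat.mod_eq_of_lt (by omega)]
            omega
          refine ⟨f m0, ?_, hm0k⟩
          simp only [Nat.zero_mul, Nat.add_zero]
          rw [hρm, this]
          exact hf m0 (by omega)
        | succ j ih =>
          have : m0 + (j + 1) * p = (m0 + j * p) + p := by ring
          rw [this]
          have hple : n1 ≤ m0 + j * p := by omega
          obtain ⟨v, hv1, hv2⟩ := ih
          refine ⟨v, ?_, hv2⟩
          rw [hρm, hper _ hple, ← hρm]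
          exact hv1
      refine ⟨m0 + N * p, by nlinarith [hm0.1], hcol N⟩
    · intro j hj
      refine ⟨n1, fun n hn => ?_⟩
      rintro ⟨v, hv1, hv2⟩
      obtain ⟨m', hm1', hm2', hm3'⟩ := hρloop n hn
      rw [hm3'] at hv1
      cases hv1
      have := hkmax m' hm1' hm2'
      rw [hv2] at this
      exact absurd hj (not_lt.mpr this)
  refine ⟨ρ, ⟨hρ0, hρstep⟩, ?_⟩
  rw [PlayValue, dif_neg hnonone, if_pos hwon]

end AuxLasso

section AuxMax
variable {V : Type} {d : ℕ}

lemma Prof.le_total (p q : Prof d) : Prof.Le p q ∨ Prof.Le q p := by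
  by_cases h : p = q
  · exact Or.inl (Or.inl h)
  · rcases Prof.lt_total h with h1 | h1
    · exact Or.inl (Or.inr h1)
    · exact Or.inr (Or.inr h1)

lemma exists_max_of_finite {S : Set (Prof d)} (hfin : S.Finite) (hne : S.Nonempty) :
    ∃ p, IsMaxOf S p := by
  classical
  revert hne
  refine Set.Finite.induction_on (motive := fun S _ => S.Nonempty → ∃ p, IsMaxOf S p) S hfin (by simp) ?_
  intro a s ha hs ih hne
  · by_cases hse : s.Nonempty
    · obtain ⟨m, hm1, hm2⟩ := ih hse
      rcases Prof.le_total a m with h | h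
      · exact ⟨m, Or.inr hm1, by rintro q (rfl | hq); exacts [h, hm2 q hq]⟩
      · refine ⟨a, Or.inl rfl, ?_⟩
        rintro q (rfl | hq)
        · exact Prof.le_refl _
        · exact Prof.le_trans (hm2 q hq) h
    · rw [Set.not_nonempty_iff_eq_empty] at hse
      subst hse
      exact ⟨a, Or.inl rfl, by rintro q (rfl | hq); exacts [Prof.le_refl _, absurd hq (by simp)]⟩

lemma maxExists [Fintype V] {A : PGA V d} {σ : V → Option V → Prop} {τ : V → V → Prop}
    (hσ : Strategy0 A σ) (hτ : Strategy1 A τ) (hr : Reasonable A σ) (s : V) :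
    ∃ M, IsMaxOf {q | ∃ π, IsPlay A σ τ s π ∧ q = PlayValue A π} M ∧ M ≠ Prof.bot := by
  classical
  set S := {q | ∃ π, IsPlay A σ τ s π ∧ q = PlayValue A π} with hS
  by_cases hrep : ∃ π, IsPlay A σ τ s π ∧ ∃ n1 n2 u, n1 < n2 ∧ π n1 = some u ∧ π n2 = some u
  · obtain ⟨π, hplay, n1, n2, u, h12, h1, h2⟩ := hrep
    obtain ⟨ρ, hρ, hval⟩ := lasso hτ hr hplay h12 h1 h2
    refine ⟨Prof.top, ⟨⟨ρ, hρ, hval.symm⟩, fun q _ => Prof.le_top q⟩, by simp⟩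
  · have hterm : ∀ π, IsPlay A σ τ s π → ∃ m, m ≤ Fintype.card V ∧ π m = none := by
      intro π hplay
      by_contra hno
      push_neg at hno
      have hsome : ∀ m : Fin (Fintype.card V + 1), ∃ v, π (m : ℕ) = some v := by
        intro m
        cases hπ : π (m : ℕ) with
        | none => exact absurd hπ (hno _ (by omega))
        | some v => exact ⟨v, rfl⟩
      choose g hg using hsome
      obtain ⟨i, j, hij, hgij⟩ := Fintype.exists_ne_map_eq_of_card_lt g (by simp)
      rcases lt_or_gt_of_ne hij with hlt | hlt
      · exact hrep ⟨π, hplay, i, j, g i, hlt, hg i, hgij ▸ hg j⟩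
      · exact hrep ⟨π, hplay, j, i, g j, hlt, hg j, hgij ▸ hg i⟩
    have hval : ∀ q ∈ S, ∃ g : Fin d → ℤ, q = Prof.fin g ∧
        ∀ k, g k ∈ Set.Icc (0 : ℤ) (Fintype.card V) := by
      rintro q ⟨π, hplay, rfl⟩
      obtain ⟨m, hm, hm2⟩ := hterm π hplay
      have hex : ∃ n, π n = none := ⟨m, hm2⟩
      refine ⟨_, by rw [PlayValue, dif_pos hex], ?_⟩
      intro k
      constructor
      · positivity
      · have hle : Nat.find hex ≤ m := Nat.find_le hm2
        have : ((Finset.range (Nat.find hex)).filter (fun n => ColorAt A π n k)).card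
            ≤ Nat.find hex := by
          calc _ ≤ (Finset.range (Nat.find hex)).card := Finset.card_filter_le _ _
          _ = Nat.find hex := Finset.card_range _
        exact_mod_cast this.trans (hle.trans hm)
    have hfin : S.Finite := by
      have hBfin : (Set.univ.pi (fun _ : Fin d => Set.Icc (0 : ℤ) (Fintype.card V))).Finite :=
        Set.Finite.pi (fun _ => Set.finite_Icc _ _)
      refine Set.Finite.subset (hBfin.image Prof.fin) ?_
      intro q hq
      obtain ⟨g, rfl, hb⟩ := hval q hq
      exact ⟨g, Set.mem_univ_pi.mpr hb, rfl⟩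
    have hne : S.Nonempty := by
      obtain ⟨π, hπ⟩ := exists_play A σ τ hσ hτ s
      exact ⟨PlayValue A π, π, hπ, rfl⟩
    obtain ⟨M, hM⟩ := exists_max_of_finite hfin hne
    refine ⟨M, hM, ?_⟩
    obtain ⟨g, rfl, -⟩ := hval M hM.1
    simp

end AuxMax

section AuxCons
variable {V : Type} {d : ℕ}

lemma colorAt_congr {A : PGA V d} {π ρ : ℕ → Option V} {n m : ℕ} (h : π n = ρ m) :
    ColorAt A π n k ↔ ColorAt A ρ m k := by
  unfold ColorAt; rw [h]

lemma card_filter_range_succ (p : ℕ → Prop) [DecidablePred p] (N : ℕ) :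
    ((Finset.range (N + 1)).filter p).card
      = ((Finset.range N).filter p).card + (if p N then 1 else 0) := by
  rw [Finset.range_add_one, Finset.filter_insert]
  split
  · rw [Finset.card_insert_of_notMem (by simp)]
  · simp

lemma playValue_cons (A : PGA V d) {π ρ : ℕ → Option V} {u : V}
    (hu : π 0 = some u) (hshift : ∀ n, π (n + 1) = ρ n) :
    PlayValue A π = (PlayValue A ρ).add (unitProf A u) := by
  classical
  have hca0 : ∀ k, ColorAt A π 0 k ↔ A.color u = k := by
    intro k
    constructor
    · rintro ⟨v, hv, hc⟩; rw [hu] at hv; cases hv; exact hc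
    · intro hc; exact ⟨u, hu, hc⟩
  have hcount : ∀ N k, ((Finset.range (N + 1)).filter (fun m => ColorAt A π m k)).card
      = ((Finset.range N).filter (fun m => ColorAt A ρ m k)).card
        + (if A.color u = k then 1 else 0) := by
    intro N k
    induction N with
    | zero =>
      simp only [Finset.range_one, Finset.range_zero, Finset.filter_empty, Finset.card_empty,
        Nat.zero_add]
      rw [Finset.filter_singleton]
      by_cases hc : A.color u = k
      · rw [if_pos ((hca0 k).mpr hc), if_pos hc]; simp
      · rw [if_neg (fun hcc => hc ((hca0 k).mp hcc)), if_neg hc]; simp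
    | succ N ih =>
      rw [card_filter_range_succ (fun m => ColorAt A π m k) (N + 1),
        card_filter_range_succ (fun m => ColorAt A ρ m k) N, ih]
      by_cases hc : ColorAt A ρ N k
      · rw [if_pos ((colorAt_congr (hshift N)).mpr hc), if_pos hc]
        omega
      · rw [if_neg (fun hcc => hc ((colorAt_congr (hshift N)).mp hcc)), if_neg hc]
        omega
  by_cases hex : ∃ n, ρ n = none
  · have hexπ : ∃ n, π n = none := ⟨Nat.find hex + 1, by rw [hshift]; exact Nat.find_spec hex⟩
    have hfind : Nat.find hexπ = Nat.find hex + 1 := by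
      rw [Nat.find_eq_iff]
      refine ⟨by rw [hshift]; exact Nat.find_spec hex, ?_⟩
      intro m hm
      cases m with
      | zero => rw [hu]; simp
      | succ j => rw [hshift]; exact Nat.find_min hex (by omega)
    rw [PlayValue, PlayValue, dif_pos hexπ, dif_pos hex]
    simp only [Prof.add]
    congr 1
    funext k
    rw [hfind, hcount (Nat.find hex) k]
    simp only [unitProf, Pi.add_apply]
    push_cast
    by_cases hc : A.color u = k <;> simp [hc]
  · have hexπ : ¬ ∃ n, π n = none := by
      rintro ⟨n, hn⟩
      cases n with
      | zero => rw [hu] at hn; cases hn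
      | succ j => rw [hshift] at hn; exact hex ⟨j, hn⟩
    have hwon : Won0B A π ↔ Won0B A ρ := by
      constructor
      · rintro ⟨k, he, hio, hev⟩
        refine ⟨k, he, ?_, ?_⟩
        · intro N
          obtain ⟨n, hn, hc⟩ := hio (N + 1)
          obtain ⟨m, rfl⟩ : ∃ m, n = m + 1 := ⟨n - 1, by omega⟩
          exact ⟨m, by omega, (colorAt_congr (hshift m)).mp hc⟩
        · intro j hj
          obtain ⟨N, hN⟩ := hev j hj
          exact ⟨N, fun n hn hc => hN (n + 1) (by omega) ((colorAt_congr (hshift n)).mpr hc)⟩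
      · rintro ⟨k, he, hio, hev⟩
        refine ⟨k, he, ?_, ?_⟩
        · intro N
          obtain ⟨n, hn, hc⟩ := hio N
          exact ⟨n + 1, by omega, (colorAt_congr (hshift n)).mpr hc⟩
        · intro j hj
          obtain ⟨N, hN⟩ := hev j hj
          refine ⟨N + 1, fun n hn hc => ?_⟩
          obtain ⟨m, rfl⟩ : ∃ m, n = m + 1 := ⟨n - 1, by omega⟩
          exact hN m (by omega) ((colorAt_congr (hshift m)).mp hc)
    rw [PlayValue, PlayValue, dif_neg hexπ, dif_neg hex]
    by_cases hw : Won0B A ρ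
    · rw [if_pos (hwon.mpr hw), if_pos hw]; rfl
    · rw [if_neg (fun hc => hw (hwon.mp hc)), if_neg hw]; rfl

end AuxCons

section AuxBound
variable {V : Type} {d : ℕ}

/-- If `W` is a "pre-fixed point" along all possible steps of `(σ,τ)` and `σ` is
reasonable, every play of `(σ,τ)` from `s` has value at most `W (some s)`. -/
lemma playBound [Fintype V] {A : PGA V d} {σ : V → Option V → Prop} {τ : V → V → Prop}
    (hτ : Strategy1 A τ) (hr : Reasonable A σ)
    (W : Option V → Prof d) (hW0 : W none = Prof.fin 0)
    (hWb : ∀ v : V, W (some v) ≠ Prof.bot)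
    (hWstep : ∀ u y, PlayStep A σ τ (some u) y →
      Prof.Le ((W y).add (unitProf A u)) (W (some u)))
    {s : V} {π : ℕ → Option V} (hplay : IsPlay A σ τ s π) :
    Prof.Le (PlayValue A π) (W (some s)) := by
  classical
  obtain ⟨h0, hstep⟩ := hplay
  have habs : ∀ n, π n = none → π (n + 1) = none := by
    intro n hn
    have := hstep n
    rw [hn] at this
    exact this
  have hstep' : ∀ n u, π n = some u →
      Prof.Le ((W (π (n + 1))).add (unitProf A u)) (W (some u)) := by
    intro n u hn
    have := hstep n
    rw [hn] at this
    exact hWstep u _ this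
  have hinv := invariant A W h0 habs hstep'
  by_cases hex : ∃ n, π n = none
  · rw [PlayValue, dif_pos hex]
    have := hinv (Nat.find hex)
    rw [Nat.find_spec hex, hW0] at this
    have heq : (Prof.fin (0 : Fin d → ℤ)).add (Pn A π (Nat.find hex))
        = Prof.fin (Pn A π (Nat.find hex)) := by
      simp [Prof.add]
    rw [heq] at this
    exact this
  · by_cases hw : Won0B A π
    · -- infinite winning play: W along the play must hit ⊤
      have htop : ∃ n, W (π n) = Prof.top := by
        by_contra hno
        push_neg at hno
        have hsome : ∀ n, ∃ v, π n = some v := by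
          intro n
          cases hπ : π n with
          | none => exact absurd ⟨n, hπ⟩ hex
          | some v => exact ⟨v, rfl⟩
        choose g hg using hsome
        obtain ⟨n1, n2, h12, hrep⟩ : ∃ n1 n2, n1 < n2 ∧ g n1 = g n2 := by
          have hcard : Fintype.card V < Fintype.card (Fin (Fintype.card V + 1)) := by simp
          obtain ⟨i, j, hij, hgij⟩ := Fintype.exists_ne_map_eq_of_card_lt
            (fun m : Fin (Fintype.card V + 1) => g (m : ℕ)) hcard
          rcases lt_or_gt_of_ne hij with hlt | hlt
          · exact ⟨i, j, hlt, hgij⟩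
          · exact ⟨j, i, hlt, hgij.symm⟩
        -- shifted play
        set π' : ℕ → Option V := fun m => π (n1 + m) with hπ'
        have hπ'm : ∀ m, π' m = π (n1 + m) := fun m => rfl
        have h0' : π' 0 = some (g n1) := by rw [hπ'm, Nat.add_zero]; exact hg n1
        have habs' : ∀ n, π' n = none → π' (n + 1) = none := by
          intro n hn
          rw [hπ'm] at hn ⊢
          rw [show n1 + (n + 1) = (n1 + n) + 1 by ring]
          exact habs _ hn
        have hstep'' : ∀ n u, π' n = some u →
            Prof.Le ((W (π' (n + 1))).add (unitProf A u)) (W (some u)) := by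
          intro n u hn
          rw [hπ'm] at hn
          have := hstep' (n1 + n) u hn
          rw [show n1 + n + 1 = n1 + (n + 1) by ring] at this
          exact this
        have hinv' := invariant A W h0' habs' hstep'' (n2 - n1)
        rw [hπ'm, show n1 + (n2 - n1) = n2 by omega, hg n2, ← hrep] at hinv'
        -- W (some (g n1)) is finite
        obtain ⟨w, hwfin⟩ : ∃ w, W (some (g n1)) = Prof.fin w := by
          have hb := hWb (g n1)
          have ht := hno n1
          rw [hg n1] at ht
          cases hWc : W (some (g n1)) with
          | bot => exact absurd hWc hb
          | top => exact absurd hWc ht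
          | fin w => exact ⟨w, rfl⟩
        rw [hwfin] at hinv'
        set P := Pn A π' (n2 - n1) with hPdef
        set len := n2 - n1 with hlen
        have hlen0 : 0 < len := by omega
        -- P is nonnegative
        have hP0 : ∀ k, 0 ≤ P k := by
          intro k; simp [hPdef, Pn]
        have hca : ∀ m k, ColorAt A π' m k ↔ A.color (g (n1 + m)) = k := by
          intro m k
          constructor
          · rintro ⟨v, hv, hc⟩
            rw [hπ'm, hg (n1 + m)] at hv
            cases hv; exact hc
          · intro hc
            exact ⟨g (n1 + m), by rw [hπ'm]; exact hg (n1 + m), hc⟩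
        -- the maximal color in the loop
        have hKne : ((Finset.range len).image (fun m => A.color (g (n1 + m)))).Nonempty :=
          (Finset.nonempty_range_iff.mpr (by omega)).image _
        set k' := ((Finset.range len).image (fun m => A.color (g (n1 + m)))).max' hKne with hk'
        obtain ⟨m0, hm0, hm0k⟩ : ∃ m0, m0 < len ∧ A.color (g (n1 + m0)) = k' := by
          have hmm := Finset.max'_mem _ hKne
          rw [Finset.mem_image] at hmm
          obtain ⟨m0, hm0, hm0k⟩ := hmm
          exact ⟨m0, Finset.mem_range.mp hm0, hm0k⟩
        have hkmax : ∀ m, m < len → A.color (g (n1 + m)) ≤ k' := by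
          intro m hm
          rw [hk']
          exact Finset.le_max' ((Finset.range len).image (fun m => A.color (g (n1 + m))))
            (A.color (g (n1 + m))) (Finset.mem_image.mpr ⟨m, Finset.mem_range.mpr hm, rfl⟩)
        have hP1 : 1 ≤ P k' := by
          have : 0 < ((Finset.range len).filter (fun m => ColorAt A π' m k')).card := by
            rw [Finset.card_pos]
            exact ⟨m0, Finset.mem_filter.mpr ⟨Finset.mem_range.mpr hm0, (hca m0 k').mpr hm0k⟩⟩
          simp only [hPdef, Pn, ← hlen]
          exact_mod_cast this
        have hPj : ∀ j, k' < j → P j = 0 := by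
          intro j hj
          have : ((Finset.range len).filter (fun m => ColorAt A π' m j)).card = 0 := by
            rw [Finset.card_eq_zero, Finset.eq_empty_iff_forall_notMem]
            intro m hm
            rw [Finset.mem_filter, Finset.mem_range] at hm
            obtain ⟨hm1, hm2⟩ := hm
            rw [hca m j] at hm2
            have := hkmax m hm1
            rw [hm2] at this
            exact absurd hj (not_lt.mpr this)
          simp only [hPdef, Pn, ← hlen]
          exact_mod_cast this
        -- k' is even
        have heven : Even (k' : ℕ) := by
          refine segment_even_max hτ hr hstep h12 g (fun m _ => hg m) hrep.symm
            ⟨n1 + m0, by omega, by omega, hm0k⟩ ?_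
          intro m hma hmb
          have := hkmax (m - n1) (by omega)
          rwa [show n1 + (m - n1) = m by omega] at this
        -- contradiction with the invariant
        have hlt : FinLt w (w + P) := by
          refine ⟨k', by have := hP1; intro hcc; simp at hcc; omega, ?_, Or.inl ⟨heven, by have := hP1; simp; omega⟩⟩
          intro j hj
          simp [hPj j hj]
        have : Prof.Lt (Prof.fin w) ((Prof.fin w).add P) := by
          simpa [Prof.add, Prof.Lt] using hlt
        exact Prof.not_lt_of_le hinv' this
      obtain ⟨n, hn⟩ := htop
      have := hinv n
      rw [hn] at this
      have hWtop : W (some s) = Prof.top := Prof.eq_top_of_top_le (by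
        have haddtop : (Prof.top : Prof d).add (Pn A π n) = Prof.top := rfl
        rwa [haddtop] at this)
      rw [PlayValue, dif_neg hex, if_pos hw, hWtop]
      exact Prof.le_refl _
    · rw [PlayValue, dif_neg hex, if_neg hw]
      exact Prof.bot_le _

end AuxBound

section AuxVal
variable {V : Type} {d : ℕ}

lemma exists_min_of_finite {S : Set (Prof d)} (hfin : S.Finite) (hne : S.Nonempty) :
    ∃ p ∈ S, ∀ q ∈ S, Prof.Le p q := by
  classical
  revert hne
  refine Set.Finite.induction_on (motive := fun S _ => S.Nonempty → ∃ p ∈ S, ∀ q ∈ S, Prof.Le p q) S hfin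
    (by simp) ?_
  intro a s ha hs ih hne
  by_cases hse : s.Nonempty
  · obtain ⟨m, hm1, hm2⟩ := ih hse
    rcases Prof.le_total a m with h | h
    · refine ⟨a, Or.inl rfl, ?_⟩
      rintro q (rfl | hq)
      · exact Prof.le_refl _
      · exact Prof.le_trans h (hm2 q hq)
    · exact ⟨m, Or.inr hm1, by rintro q (rfl | hq); exacts [h, hm2 q hq]⟩
  · rw [Set.not_nonempty_iff_eq_empty] at hse
    subst hse
    exact ⟨a, Or.inl rfl, by rintro q (rfl | hq); exacts [Prof.le_refl _, absurd hq (by simp)]⟩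

/-- The valuation of a reasonable strategy is never `-∞`. -/
lemma val_ne_bot [Fintype V] {A : PGA V d} {σ : V → Option V → Prop} {W : Option V → Prof d}
    (hσ : Strategy0 A σ) (hr : Reasonable A σ) (hW : IsValuation A σ W) (u : V) :
    W (some u) ≠ Prof.bot := by
  obtain ⟨τ, hτ, hmax⟩ := (hW.2 u).1
  obtain ⟨M, hM, hMb⟩ := maxExists hσ hτ hr u
  have : W (some u) = M :=
    Prof.le_antisymm (hM.2 _ hmax.1) (hmax.2 M hM.1)
  rw [this]; exact hMb

/-- One-step inequality of a valuation at a player-1 node: moving to a `W`-minimal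
successor does not raise `℘(u) + W(·)` above `W(u)`. -/
lemma val_player1_step [Fintype V] {A : PGA V d} {σ : V → Option V → Prop}
    {W : Option V → Prof d}
    (hσ : Strategy0 A σ) (hr : Reasonable A σ) (hW : IsValuation A σ W) (u : V)
    (hu : A.owner u = 1) {w : V} (hwmin : ∀ v, A.edge u v → Prof.Le (W (some w)) (W (some v))) :
    Prof.Le ((W (some w)).add (unitProf A u)) (W (some u)) := by
  classical
  obtain ⟨τ, hτ, hmax⟩ := (hW.2 u).1
  obtain ⟨w', hw'⟩ := hτ.2 u hu
  have hedge : A.edge u w' := (hτ.1 u w' hw').2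
  -- maximal value of plays from w' under (σ, τ)
  obtain ⟨M, hM, -⟩ := maxExists hσ hτ hr w'
  have hWw' : Prof.Le (W (some w')) M := (hW.2 w').2 M ⟨τ, hτ, hM⟩
  -- a play from u: step to w' and then the play achieving M
  obtain ⟨ρ, hρ, hMval⟩ := hM.1
  set π : ℕ → Option V := fun n => match n with
    | 0 => some u
    | n + 1 => ρ n with hπdef
  have hπ0 : π 0 = some u := rfl
  have hπs : ∀ n, π (n + 1) = ρ n := fun n => rfl
  have hπplay : IsPlay A σ τ u π := by
    refine ⟨rfl, fun n => ?_⟩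
    cases n with
    | zero =>
      rw [hπ0, hπs]
      right
      exact ⟨hu, w', hρ.1, hw'⟩
    | succ n =>
      rw [hπs, hπs]
      exact hρ.2 n
  have hπval : PlayValue A π = (PlayValue A ρ).add (unitProf A u) :=
    playValue_cons A hπ0 hπs
  have hbound : Prof.Le (PlayValue A π) (W (some u)) := hmax.2 _ ⟨π, hπplay, rfl⟩
  rw [hπval, ← hMval] at hbound
  exact Prof.le_trans (Prof.add_le_add _ (Prof.le_trans (hwmin w' hedge) hWw')) hbound

end AuxVal

/-- If `σ_a, σ_b` are reasonable strategies of player 0 such that no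
strict improvement of `σ_b` lies in `σ_a` (`S_{σ_b} ∩ σ_a = ∅`), then `σ_a ≼ σ_b`,
i.e. `𝒱_{σ_a}(s) ≼ 𝒱_{σ_b}(s)` for all nodes `s`. -/
theorem no_shared_strict_improvement_le {V : Type} {d : ℕ} [Fintype V] (A : PGA V d)
    (σa σb : V → Option V → Prop) (Va Vb : Option V → Prof d)
    (ha : Strategy0 A σa) (hb : Strategy0 A σb)
    (hra : Reasonable A σa) (hrb : Reasonable A σb)
    (hVa : IsValuation A σa Va) (hVb : IsValuation A σb Vb)
    (hdisj : ∀ s t, σa s t → ¬ StrictImp A Vb s t) :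
    ∀ x : Option V, Prof.Le (Va x) (Vb x) := by
  classical
  intro x
  cases x with
  | none => rw [hVa.1, hVb.1]; exact Prof.le_refl _
  | some s =>
    -- a `Vb`-greedy counter strategy of player 1
    have hminex : ∀ u : V, A.owner u = 1 →
        ∃ w, A.edge u w ∧ ∀ v, A.edge u v → Prof.Le (Vb (some w)) (Vb (some v)) := by
      intro u hu
      have hSfin : ((fun v => Vb (some v)) '' {v | A.edge u v}).Finite :=
        (Set.toFinite {v | A.edge u v}).image _
      have hSne : ((fun v => Vb (some v)) '' {v | A.edge u v}).Nonempty := by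
        obtain ⟨w, hw⟩ := A.succ u
        exact ⟨Vb (some w), w, hw, rfl⟩
      obtain ⟨p, hp1, hp2⟩ := exists_min_of_finite hSfin hSne
      obtain ⟨w, hw, rfl⟩ := hp1
      exact ⟨w, hw, fun v hv => hp2 _ ⟨v, hv, rfl⟩⟩
    choose F hF1 hF2 using hminex
    set τ : V → V → Prop := fun u v => ∃ h : A.owner u = 1, v = F u h with hτdef
    have hτ : Strategy1 A τ := by
      constructor
      · rintro u v ⟨h, rfl⟩
        exact ⟨h, hF1 u h⟩
      · intro u h
        exact ⟨F u h, h, rfl⟩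
    -- the step inequality for `(σa, τ)` with respect to `Vb`
    have hWstep : ∀ u y, PlayStep A σa τ (some u) y →
        Prof.Le ((Vb y).add (unitProf A u)) (Vb (some u)) := by
      rintro u y (⟨ho, hσ⟩ | ⟨ho, v, rfl, hτuv⟩)
      · have hnimp := hdisj u y hσ
        have hEdge : EdgeB A (some u) y := (ha.1 u y hσ).2
        have hnlt : ¬ Prof.Lt (Vb (some u)) (addV A u (Vb y)) := fun hc => hnimp ⟨ho, hEdge, hc⟩
        exact Prof.le_of_not_lt hnlt
      · obtain ⟨h1, rfl⟩ := hτuv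
        exact val_player1_step hb hrb hVb u h1 (hF2 u h1)
    -- the maximal play value of `(σa, τ)` from `s`
    obtain ⟨M, hM, -⟩ := maxExists ha hτ hra s
    have h1 : Prof.Le (Va (some s)) M := (hVa.2 s).2 M ⟨τ, hτ, hM⟩
    obtain ⟨π, hπ, hMval⟩ := hM.1
    have h2 : Prof.Le (PlayValue A π) (Vb (some s)) :=
      playBound hτ hra Vb hVb.1 (fun v => val_ne_bot hb hrb hVb v) hWstep hπ
    rw [← hMval] at h2
    exact Prof.le_trans h1 h2
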